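/- Let p be an odd prime, R the ring of integers of a finite ramified extension of ℚ_p with prime element t and ramification index d > 1, G = ⟨a | a^p = 1⟩. The modules X_{ji} = t^j RG + (a-1)^i RG for j = 1, …, d-1 and i = 1, …, (p-1)/2 are pairwise non-isomorphic as RG-modules. -/

import Mathlib

open MonoidAlgebra Finset

section Setup
variable {R : Type*} [CommRing R] (p : ℕ) [Fact p.Prime]

local notation "G" => Multiplicative (ZMod p)
local notation "A" => MonoidAlgebra R G

noncomputable def aa : MonoidAlgebra R G := MonoidAlgebra.of R G (Multiplicative.ofAdd 1)

lemma aa_pow (k : ℕ) : (aa p : A) ^ k = single (Multiplicative.ofAdd (k : ZMod p)) (1 : R) := by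
  rw [aa, of_apply, single_pow, one_pow]
  congr 1
  rw [← ofAdd_nsmul, nsmul_eq_mul, mul_one]

lemma coeff_sub_one_pow (s : ℕ) (hs : s < p) :
    (((aa p : A) - 1) ^ s).coeff (Multiplicative.ofAdd (s : ZMod p)) = 1 := by
  classical
  rw [sub_eq_add_neg, add_pow, coeff_sum, Finsupp.finset_sum_apply]
  rw [Finset.sum_eq_single s]
  · have : ((aa p : A) ^ s * (-1) ^ (s - s) * (s.choose s : A)) =
        (aa p : A) ^ s * algebraMap R A ((-1) ^ (s-s) * (s.choose s : R)) := by
      push_cast [map_mul, map_pow, map_neg, map_one]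
      ring
    rw [this, aa_pow, coe_algebraMap]
    simp
  · intro k hk hks
    have hklt : k < p := lt_of_le_of_lt (by simpa using Finset.mem_range_succ_iff.mp hk) hs
    have : ((aa p : A) ^ k * (-1) ^ (s - k) * (s.choose k : A)) =
        (aa p : A) ^ k * algebraMap R A ((-1) ^ (s-k) * (s.choose k : R)) := by
      push_cast [map_mul, map_pow, map_neg, map_one]
      ring
    rw [this, aa_pow, coe_algebraMap]
    have hne : (Multiplicative.ofAdd (k : ZMod p)) ≠ (Multiplicative.ofAdd (s : ZMod p)) := by
      intro h
      apply hks
      have := Multiplicative.ofAdd.injective h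
      have h1 : ((k : ZMod p)).val = ((s : ZMod p)).val := by rw [this]
      rwa [ZMod.val_cast_of_lt hklt, ZMod.val_cast_of_lt hs] at h1
    simp only [Function.comp_apply, Algebra.algebraMap_self_apply]
    rw [MonoidAlgebra.single_mul_single, coeff_single, Finsupp.single_apply]
    rw [if_neg (by simpa using hne)]
  · intro h
    exact absurd (Finset.self_mem_range_succ s) h

end Setup

section More
variable {R : Type*} [CommRing R] {p : ℕ} [Fact p.Prime]

local notation "G" => Multiplicative (ZMod p)
local notation "A" => MonoidAlgebra R G

-- detection: if (algebraMap r) * y^s = (algebraMap c) * w then r * 1 = c * (coeff of w)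
lemma detect {s : ℕ} (hs : s < p) {r c : R} {w : A}
    (h : algebraMap R A r * ((aa p : A) - 1) ^ s = algebraMap R A c * w) :
    ∃ e : R, r = c * e := by
  have h2 := congrArg (fun z : A => z.coeff (Multiplicative.ofAdd (s : ZMod p))) h
  simp only [coe_algebraMap, Function.comp_apply, Algebra.algebraMap_self_apply] at h2
  rw [MonoidAlgebra.single_one_mul_apply, MonoidAlgebra.single_one_mul_apply,
    coeff_sub_one_pow p s hs, mul_one] at h2
  exact ⟨_, h2⟩

-- y^s not in tA
lemma not_mem_t {s : ℕ} (hs : s < p) {t : R} (htu : ¬ IsUnit t) {w : A}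
    (h : ((aa p : A) - 1) ^ s = algebraMap R A t * w) : False := by
  have h2 : algebraMap R A (1:R) * ((aa p : A) - 1) ^ s = algebraMap R A t * w := by
    rw [map_one, one_mul]; exact h
  obtain ⟨e, he⟩ := detect hs h2
  exact htu (IsUnit.of_mul_eq_one e he.symm)

-- augmentation
noncomputable def eps : MonoidAlgebra R G →ₐ[R] R := MonoidAlgebra.lift R R G 1

lemma eps_of (g : G) : (eps (R := R) (p := p)) (MonoidAlgebra.of R G g) = 1 := by
  show (MonoidAlgebra.lift R R G 1) (MonoidAlgebra.of R G g) = 1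
  rw [MonoidAlgebra.lift_of]; simp

lemma eps_aa : (eps (R := R) (p := p)) (aa p : A) = 1 := by
  rw [aa, eps_of]

lemma eps_aa_sub_one : (eps (R := R) (p := p)) ((aa p : A) - 1) = 0 := by
  rw [map_sub, map_one, eps_aa, sub_self]

lemma eps_algebraMap (r : R) : (eps (R := R) (p := p)) (algebraMap R A r) = r := by
  exact (eps (R := R) (p := p)).commutes r

-- every element = algebraMap (eps z) + y * z₁
lemma eps_decomp (z : A) : ∃ z₁ : A,
    z = algebraMap R A ((eps (R := R) (p := p)) z) + ((aa p : A) - 1) * z₁ := by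
  classical
  induction z using MonoidAlgebra.induction_linear with
  | zero => exact ⟨0, by simp⟩
  | add f g hf hg =>
      obtain ⟨f₁, hf₁⟩ := hf; obtain ⟨g₁, hg₁⟩ := hg
      refine ⟨f₁ + g₁, ?_⟩
      conv_lhs => rw [hf₁, hg₁]
      rw [map_add, map_add, mul_add]
      ring
  | single g r =>
      refine ⟨algebraMap R A r * (∑ n ∈ Finset.range (Multiplicative.toAdd g).val, (aa p : A) ^ n), ?_⟩
      have h1 : (single g r : A) = algebraMap R A r * (aa p : A) ^ (Multiplicative.toAdd g).val := by
        rw [aa_pow]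
        rw [MonoidAlgebra.coe_algebraMap]
        simp only [Function.comp_apply, Algebra.algebraMap_self_apply]
        rw [MonoidAlgebra.single_mul_single, mul_one, one_mul]
        congr 1
        rw [ZMod.natCast_val, ZMod.cast_id]
        rfl
      have h2 : (eps (R := R) (p := p)) (single g r : A) = r := by
        rw [h1, map_mul, eps_algebraMap, map_pow, eps_aa, one_pow, mul_one]
      rw [h2, h1]
      have h3 : ((aa p : A) - 1) * (∑ n ∈ Finset.range (Multiplicative.toAdd g).val, (aa p : A) ^ n)
          = (aa p : A) ^ (Multiplicative.toAdd g).val - 1 := by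
        rw [mul_comm, geom_sum_mul]
      rw [show ((aa p : A) - 1) * (algebraMap R A r * ∑ n ∈ Finset.range (Multiplicative.toAdd g).val, (aa p : A) ^ n) = algebraMap R A r * (((aa p : A) - 1) * ∑ n ∈ Finset.range (Multiplicative.toAdd g).val, (aa p : A) ^ n) from by ring, h3]
      ring
end More

section YP
variable {R : Type*} [CommRing R] {p : ℕ} [Fact p.Prime]

local notation "G" => Multiplicative (ZMod p)
local notation "A" => MonoidAlgebra R G

lemma aa_pow_p : (aa p : A) ^ p = 1 := by
  rw [aa_pow, ZMod.natCast_self]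
  rfl

lemma y_pow_p : ∃ w : A, ((aa p : A) - 1) ^ p = (p : A) * (((aa p : A) - 1) * w) := by
  classical
  set y : A := (aa p : A) - 1 with hy
  have hp1 : p - 1 + 1 = p := Nat.succ_pred_eq_of_pos (Fact.out : p.Prime).pos
  have hb : (1 : A) = ∑ k ∈ Finset.range (p + 1), y ^ k * (p.choose k : A) := by
    have h0 : (y + 1) ^ p = (1 : A) := by rw [hy, sub_add_cancel, aa_pow_p]
    rw [← h0, add_pow]
    exact Finset.sum_congr rfl fun k _ => by rw [one_pow, mul_one]
  rw [Finset.sum_range_succ, Nat.choose_self, Nat.cast_one, mul_one] at hb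
  have hb2 : ∑ k ∈ Finset.range p, y ^ k * (p.choose k : A)
      = (∑ k ∈ Finset.range (p-1), y ^ (k+1) * (p.choose (k+1) : A)) + 1 := by
    have h := Finset.sum_range_succ' (fun k => y ^ k * (p.choose k : A)) (p-1)
    rw [hp1] at h
    rw [h]
    simp
  rw [hb2] at hb
  refine ⟨-∑ k ∈ Finset.range (p-1), y ^ k * ((p.choose (k+1) / p : ℕ) : A), ?_⟩
  have hterm : ∀ k ∈ Finset.range (p-1),
      y ^ (k+1) * (p.choose (k+1) : A) = (p : A) * (y * (y ^ k * ((p.choose (k+1) / p : ℕ) : A))) := by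
    intro k hk
    have hklt : k + 1 < p := by
      have := Finset.mem_range.mp hk; omega
    have hdvd : p ∣ p.choose (k+1) :=
      (Fact.out : p.Prime).dvd_choose_self (Nat.succ_ne_zero k) hklt
    have : (p.choose (k+1) : A) = (p : A) * ((p.choose (k+1) / p : ℕ) : A) := by
      rw [← Nat.cast_mul, Nat.mul_div_cancel' hdvd]
    rw [this, pow_succ]
    ring
  rw [Finset.sum_congr rfl hterm, ← Finset.mul_sum, ← Finset.mul_sum] at hb
  have := hb
  -- 1 = p * (y * Σ) + 1 + y^p  ⇒  y^p = - p*(y*Σ)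
  have h4 : y ^ p = -((p:A) * (y * ∑ k ∈ Finset.range (p-1), y ^ k * ((p.choose (k+1) / p : ℕ) : A))) := by
    linear_combination -this
  rw [h4]
  ring
end YP

section Main
variable {R : Type*} [CommRing R] [IsDomain R] {p : ℕ} [Fact p.Prime]

local notation "G" => Multiplicative (ZMod p)
local notation "A" => MonoidAlgebra R G

variable (t θ : R) {d : ℕ}

/-- The ideal X_{j i}. -/
noncomputable def XI (j i : ℕ) : Ideal (MonoidAlgebra R G) :=
  Ideal.span {algebraMap R (MonoidAlgebra R G) (t^j), ((aa p : A) - 1)^i}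

lemma mem_XI {j i : ℕ} {z : A} :
    z ∈ XI t j i ↔ ∃ u v : A, u * algebraMap R A (t^j) + v * ((aa p : A) - 1)^i = z :=
  Ideal.mem_span_pair

lemma pow_mem_XI (j i : ℕ) : ((aa p : A) - 1)^i ∈ XI t j i :=
  Ideal.subset_span (by simp)

lemma t_mem_XI (j i : ℕ) : algebraMap R A (t^j) ∈ XI t j i :=
  Ideal.subset_span (by simp)

-- product of algebraMaps of powers
lemma aM_pow_mul {e₁ e₂ e₃ : ℕ} (h : e₁ + e₂ = e₃) :
    algebraMap R A (t^e₁) * algebraMap R A (t^e₂) = algebraMap R A (t^e₃) := by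
  rw [← map_mul, ← pow_add, h]

lemma aM_t_mul {e₂ e₃ : ℕ} (h : e₂ + 1 = e₃) :
    algebraMap R A t * algebraMap R A (t^e₂) = algebraMap R A (t^e₃) := by
  rw [← map_mul]
  congr 1
  rw [← h, pow_succ]
  ring

section Step

lemma pA_eq (hp : (p : R) = t^d * θ) : (p : A) = algebraMap R A (t^d * θ) := by
  rw [← hp, map_natCast]

/-- Step A: y^(p-i) * X ⊆ t * X -/
lemma stepA (hp : (p : R) = t^d * θ) {j i : ℕ} (hj1 : 1 ≤ j) (hjd : j + 1 ≤ d) (h2i : 2*i + 1 ≤ p)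
    {ξ : A} (hξ : ξ ∈ XI t j i) :
    ∃ χ ∈ XI t j i, ((aa p : A) - 1)^(p-i) * ξ = algebraMap R A t * χ := by
  obtain ⟨u, v, huv⟩ := (mem_XI t).mp hξ
  obtain ⟨w, hw⟩ := (y_pow_p : ∃ w : A, _)
  set y : A := (aa p : A) - 1 with hy
  refine ⟨(u * algebraMap R A (t^(j-1)) * y^(p-2*i)) * y^i
      + (v * algebraMap R A (t^(d-1-j)*θ) * (y*w)) * algebraMap R A (t^j), ?_, ?_⟩
  · exact Ideal.add_mem _ (Ideal.mul_mem_left _ _ (pow_mem_XI t j i))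
      (Ideal.mul_mem_left _ _ (t_mem_XI t j i))
  · have e1 : y^(p-i) * y^i = (p:A) * (y * w) := by
      rw [← pow_add, show p - i + i = p by omega, hw]
    have e2 : algebraMap R A t * algebraMap R A (t^(j-1)) = algebraMap R A (t^j) :=
      aM_t_mul (p := p) t (by omega : (j-1) + 1 = j)
    have e3 : algebraMap R A t * algebraMap R A (t^(d-1-j)*θ) * algebraMap R A (t^j)
        = algebraMap R A (t^d*θ) := by
      rw [← map_mul, ← map_mul]
      congr 1
      rw [show t * (t^(d-1-j)*θ) * t^j = t^(1 + (d-1-j) + j) * θ by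
        rw [pow_add, pow_add, pow_one]; ring]
      congr 2
      omega
    have e4 : y^(p-i) * y^i = algebraMap R A (t^d*θ) * (y * w) := by
      rw [e1, pA_eq t θ hp]
    have e5 : y^(p-2*i) * y^i = y^(p-i) := by
      rw [← pow_add]; congr 1; omega
    linear_combination (-(y^(p-i))) * huv + v * e4 + (-(u*y^(p-i))) * e2
      + (-(u * algebraMap R A t * algebraMap R A (t^(j-1)))) * e5 + (-(v*(y*w))) * e3

/-- Final contradiction: y^i = y*α + t*β with α β ∈ X is impossible. -/
lemma no_decomp (hp : (p : R) = t^d * θ) {j i : ℕ} (hj1 : 1 ≤ j) (hjd : j + 1 ≤ d) (hi : i < p) (htu : ¬ IsUnit t)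
    {α β : A} (hα : α ∈ XI t j i) (hβ : β ∈ XI t j i)
    (h : ((aa p : A) - 1)^i = ((aa p : A) - 1) * α + algebraMap R A t * β) : False := by
  obtain ⟨u₂, v₂, h2⟩ := (mem_XI t).mp hα
  obtain ⟨w, hw⟩ := (y_pow_p : ∃ w : A, _)
  set y : A := (aa p : A) - 1 with hy
  set D : A := algebraMap R A (t^(j-1)) * y * u₂ + β with hD
  have key1 : y^i * (1 - y * v₂) = algebraMap R A t * D := by
    have e2 : algebraMap R A t * algebraMap R A (t^(j-1)) = algebraMap R A (t^j) :=
      aM_t_mul (p := p) t (by omega : (j-1) + 1 = j)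
    rw [hD]
    linear_combination h + (-y)*h2 + (-(y*u₂))*e2
  -- multiply by geometric series
  set Gm : A := ∑ n ∈ Finset.range p, (y*v₂)^n with hGm
  have key2 : (1 - y*v₂) * Gm = 1 - (y*v₂)^p := by
    have := geom_sum_mul (y*v₂) p
    rw [hGm]; linear_combination -this
  have key3 : y^i = algebraMap R A t *
      (D * Gm + algebraMap R A (t^(d-1)*θ) * (y*w) * y^i * v₂^p) := by
    have e6 : y^i * ((1 - y*v₂) * Gm) = algebraMap R A t * (D * Gm) := by
      rw [show y^i * ((1 - y*v₂) * Gm) = (y^i * (1 - y*v₂)) * Gm by ring, key1]; ring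
    rw [key2] at e6
    have e7 : y^i * (y*v₂)^p = algebraMap R A t * (algebraMap R A (t^(d-1)*θ) * (y*w) * y^i * v₂^p) := by
      rw [mul_pow, show y^i * (y^p * v₂^p) = y^p * y^i * v₂^p by ring, hw, pA_eq t θ hp]
      rw [show algebraMap R A t * (algebraMap R A (t^(d-1)*θ) * (y*w) * y^i * v₂^p)
        = (algebraMap R A t * algebraMap R A (t^(d-1)*θ)) * (y*w) * y^i * v₂^p by ring]
      have hd1 : (d-1)+1 = d := by omega
      have hdd : t * (t^(d-1)*θ) = t^d*θ := by
        calc t * (t^(d-1)*θ) = t^((d-1)+1)*θ := by rw [pow_succ]; ring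
        _ = t^d*θ := by rw [hd1]
      rw [show algebraMap R A t * algebraMap R A (t^(d-1)*θ) = algebraMap R A (t^d*θ) by
        rw [← map_mul, hdd]]
    linear_combination e6 + e7
  exact not_mem_t hi htu key3

/-- Core j-lemma: if m < j' then t^m ξ ∈ yX' forces ξ ∈ yX' + tX'. -/
lemma jlemma (hp : (p : R) = t^d * θ) (ht0 : t ≠ 0) {j' i' m : ℕ}
    (hm : m < j') (hjd' : j' + 1 ≤ d) (hi1' : 1 ≤ i') (hi'p : 2*i' + 1 ≤ p)
    {ξ χ : A} (hξ : ξ ∈ XI t j' i') (hχ : χ ∈ XI t j' i')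
    (heq : algebraMap R A (t^m) * ξ = ((aa p : A) - 1) * χ) :
    ∃ α ∈ XI t j' i', ∃ β ∈ XI t j' i',
      ξ = ((aa p : A) - 1) * α + algebraMap R A t * β := by
  obtain ⟨u, v, huv⟩ := (mem_XI t).mp hξ
  obtain ⟨g, h, hgh⟩ := (mem_XI t).mp hχ
  obtain ⟨w, hw⟩ := (y_pow_p : ∃ w : A, _)
  set y : A := (aa p : A) - 1 with hy
  set P : A := algebraMap R A (t^m) with hP
  set Q : A := algebraMap R A (t^(j')) with hQ
  set Tm1 : A := algebraMap R A (t^(m+1)) with hTm1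
  have heq2 : P * (u * Q + v * y^(i')) = y * (g * Q + h * y^(i')) := by
    rw [huv, hgh]; exact heq
  -- (a) eps u = 0
  have hepsu : (eps (R := R) (p := p)) u = 0 := by
    have h1 := congrArg (eps (R := R) (p := p)) heq2
    rw [hP, hQ] at h1
    simp only [map_mul, map_add, map_pow, eps_algebraMap] at h1
    rw [show (eps (R := R) (p := p)) y = 0 from by rw [hy]; exact eps_aa_sub_one] at h1
    rw [zero_pow (by omega : i' ≠ 0)] at h1
    have h2 : (eps (R := R) (p := p)) u * t^(m+j') = 0 := by
      rw [pow_add]; linear_combination h1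
    rcases mul_eq_zero.mp h2 with h3 | h3
    · exact h3
    · exact absurd h3 (pow_ne_zero _ ht0)
  -- decompositions
  obtain ⟨u₁, hu₁⟩ := eps_decomp u
  rw [hepsu, map_zero, zero_add] at hu₁
  obtain ⟨v₁, hv₁⟩ := eps_decomp v
  rw [← hy] at hu₁ hv₁
  -- exponent identities
  have A1 : y^(p-1-i') * y^(i') = y^(p-1) := by rw [← pow_add]; congr 1; omega
  have A2 : y * y^(p-1-i') = y^(p-i') := by
    rw [show y * y^(p-1-i') = y^(1+(p-1-i')) by rw [pow_add, pow_one]]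
    congr 1; omega
  have A3 : y * y^(p-1) = y^p := by
    rw [show y * y^(p-1) = y^(1+(p-1)) by rw [pow_add, pow_one]]
    congr 1; omega
  have A4 : y^(p-i') * y^(i') = y^p := by rw [← pow_add]; congr 1; omega
  have A5 : y^p = algebraMap R A (t^d*θ) * (y*w) := by rw [hw, pA_eq t θ hp]
  have A6 : Tm1 * algebraMap R A (t^(j'-m-1)) = Q := by
    rw [hTm1, hQ]; exact aM_pow_mul (p := p) t (by omega : (m+1) + (j'-m-1) = j')
  have A7 : Tm1 * algebraMap R A (t^(d-m-1)*θ) = algebraMap R A (t^d*θ) := by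
    rw [hTm1, ← map_mul]
    congr 1
    rw [show t^(m+1) * (t^(d-m-1)*θ) = (t^(m+1)*t^(d-m-1))*θ by ring, ← pow_add,
      show m+1+(d-m-1) = d by omega]
  have A8 : Tm1 * algebraMap R A (t^(j'-1)) = algebraMap R A (t^(m+j')) := by
    rw [hTm1]; exact aM_pow_mul (p := p) t (by omega : (m+1) + (j'-1) = m+j')
  have A9 : P * Q = algebraMap R A (t^(m+j')) := by
    rw [hP, hQ]; exact aM_pow_mul (p := p) t rfl
  have A10 : algebraMap R A (t^m * (eps (R := R) (p := p)) v)
      = P * algebraMap R A ((eps (R := R) (p := p)) v) := by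
    rw [hP, map_mul]
  set E : A := algebraMap R A ((eps (R := R) (p := p)) v) with hE
  -- step1
  have step1 : P * (v * y^(p-1)) = g * Q * y^(p-i') + h * y^p
      - algebraMap R A (t^(m+j')) * (u * y^(p-1-i')) := by
    have h0 : (P * (u * Q + v * y^(i'))) * y^(p-1-i')
        = (y * (g * Q + h * y^(i'))) * y^(p-1-i') := by rw [heq2]
    linear_combination h0 - P*v*A1 + g*Q*A2 + h*y^(i')*A2 + h*A4 - u*y^(p-1-i')*A9
  -- main valuation equation
  set W : A := algebraMap R A (t^(j'-m-1)) * g * y^(p-i')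
      + algebraMap R A (t^(d-m-1)*θ) * (y*w) * (h - P*v₁)
      - algebraMap R A (t^(j'-1)) * (u * y^(p-1-i')) with hW
  have hv : algebraMap R A (t^m * (eps (R := R) (p := p)) v) * y^(p-1) = Tm1 * W := by
    rw [hW]
    linear_combination y^(p-1)*A10 - P*y^(p-1)*hv₁ - P*v₁*A3 + step1
      - g*y^(p-i')*A6 - (y*w)*(h - P*v₁)*A7 + (h - P*v₁)*A5 + (u*y^(p-1-i'))*A8
  -- detect
  obtain ⟨e, he⟩ := detect (show p-1 < p by omega) hv
  have hev : (eps (R := R) (p := p)) v = t * e := by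
    have h5 : t^m * ((eps (R := R) (p := p)) v) = t^m * (t*e) := by
      rw [he, pow_add, pow_one]; ring
    exact mul_left_cancel₀ (pow_ne_zero _ ht0) h5
  -- assemble
  have hte : algebraMap R A t * algebraMap R A e = algebraMap R A (t*e) := (map_mul _ _ _).symm
  have hv0 : v = algebraMap R A (t*e) + y*v₁ := by rw [← hev]; exact hv₁
  refine ⟨u₁ * Q + v₁ * y^(i'), ?_, algebraMap R A e * y^(i'), ?_, ?_⟩
  · exact (mem_XI t).mpr ⟨u₁, v₁, rfl⟩
  · exact Ideal.mul_mem_left _ _ (pow_mem_XI t j' i')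
  · linear_combination -huv + Q*hu₁ + y^(i')*hv0 - y^(i')*hte
/-- transfer a 2-term multiplicative relation through a module iso -/
lemma map_rel {X X' : Ideal (MonoidAlgebra R G)} (f : ↥X ≃ₗ[MonoidAlgebra R G] ↥X')
    {c₁ c₂ : A} {x z : A} (hx : x ∈ X) (hz : z ∈ X) (h : c₁ * x = c₂ * z) :
    c₁ * (f ⟨x, hx⟩ : A) = c₂ * (f ⟨z, hz⟩ : A) := by
  have h1 : c₁ • (⟨x, hx⟩ : ↥X) = c₂ • (⟨z, hz⟩ : ↥X) := Subtype.ext (by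
    simpa [smul_eq_mul] using h)
  calc c₁ * (f ⟨x, hx⟩ : A) = ((c₁ • f ⟨x, hx⟩ : ↥X') : A) := by
        rw [SetLike.val_smul, smul_eq_mul]
  _ = ((f (c₁ • ⟨x, hx⟩) : ↥X') : A) := by rw [map_smul]
  _ = ((f (c₂ • ⟨z, hz⟩) : ↥X') : A) := by rw [h1]
  _ = ((c₂ • f ⟨z, hz⟩ : ↥X') : A) := by rw [map_smul]
  _ = c₂ * (f ⟨z, hz⟩ : A) := by rw [SetLike.val_smul, smul_eq_mul]

/-- transfer a 3-term relation through a module iso -/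
lemma map_rel3 {X X' : Ideal (MonoidAlgebra R G)} (f : ↥X ≃ₗ[MonoidAlgebra R G] ↥X')
    {c₂ c₃ : A} {x z w : A} (hx : x ∈ X) (hz : z ∈ X) (hw : w ∈ X)
    (h : x = c₂ * z + c₃ * w) :
    (f ⟨x, hx⟩ : A) = c₂ * (f ⟨z, hz⟩ : A) + c₃ * (f ⟨w, hw⟩ : A) := by
  have h1 : (⟨x, hx⟩ : ↥X) = c₂ • (⟨z, hz⟩ : ↥X) + c₃ • (⟨w, hw⟩ : ↥X) := Subtype.ext (by
    simpa [smul_eq_mul] using h)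
  calc (f ⟨x, hx⟩ : A) = ((f (c₂ • (⟨z, hz⟩ : ↥X) + c₃ • ⟨w, hw⟩) : ↥X') : A) := by rw [h1]
  _ = ((c₂ • f ⟨z, hz⟩ + c₃ • f ⟨w, hw⟩ : ↥X') : A) := by rw [map_add, map_smul, map_smul]
  _ = c₂ * (f ⟨z, hz⟩ : A) + c₃ * (f ⟨w, hw⟩ : A) := by
        rw [Submodule.coe_add, SetLike.val_smul, SetLike.val_smul, smul_eq_mul, smul_eq_mul]

lemma key_i (hp : (p : R) = t^d * θ) (htu : ¬ IsUnit t) {j i j' i' : ℕ}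
    (hj1 : 1 ≤ j) (hjd : j + 1 ≤ d) (h2i : 2*i + 1 ≤ p) (hii' : i' < i)
    (f : ↥(XI (p := p) t j i) ≃ₗ[MonoidAlgebra R G] ↥(XI (p := p) t j' i')) : False := by
  set y : A := (aa p : A) - 1 with hy
  have hyi' : y^(i') ∈ XI t j' i' := pow_mem_XI t j' i'
  set ξ0 : ↥(XI (p := p) t j i) := f.symm ⟨y^(i'), hyi'⟩ with hξ0
  obtain ⟨χ, hχ, hst⟩ := stepA t θ hp hj1 hjd h2i ξ0.2
  have h1 := map_rel f ξ0.2 hχ hst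
  have h2 : (⟨(ξ0 : A), ξ0.2⟩ : ↥(XI (p := p) t j i)) = ξ0 := Subtype.ext rfl
  rw [h2, hξ0, f.apply_symm_apply] at h1
  have h3 : y^(p-i) * y^(i') = y^(p-i+i') := (pow_add y (p-i) i').symm
  rw [show ((⟨y^(i'), hyi'⟩ : ↥(XI (p := p) t j' i')) : A) = y^(i') from rfl, h3] at h1
  exact not_mem_t (show p-i+i' < p by omega) htu h1

lemma key_j (hp : (p : R) = t^d * θ) (ht0 : t ≠ 0) (htu : ¬ IsUnit t) {j i j' i' : ℕ}
    (hj1 : 1 ≤ j) (hjd : j + 1 ≤ d) (h2i : 2*i + 1 ≤ p) (hi1 : 1 ≤ i)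
    (hjd' : j' + 1 ≤ d) (hi1' : 1 ≤ i') (h2i' : 2*i' + 1 ≤ p) (hjj' : j < j')
    (f : ↥(XI (p := p) t j i) ≃ₗ[MonoidAlgebra R G] ↥(XI (p := p) t j' i')) : False := by
  set y : A := (aa p : A) - 1 with hy
  have hyi : y^i ∈ XI t j i := pow_mem_XI t j i
  have hri : algebraMap R A (t^j) * y^(i-1) ∈ XI t j i :=
    Ideal.mul_mem_right _ _ (t_mem_XI t j i)
  have hrel : algebraMap R A (t^j) * y^i = y * (algebraMap R A (t^j) * y^(i-1)) := by
    rw [show y * (algebraMap R A (t^j) * y^(i-1)) = algebraMap R A (t^j) * (y * y^(i-1)) by ring]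
    rw [show y * y^(i-1) = y^(1+(i-1)) by rw [pow_add, pow_one]]
    rw [show 1+(i-1) = i by omega]
  have h1 := map_rel f hyi hri hrel
  obtain ⟨α, hα, β, hβ, hdec⟩ := jlemma t θ hp ht0 hjj' hjd' hi1' h2i'
    (f ⟨y^i, hyi⟩).2 (f ⟨algebraMap R A (t^j) * y^(i-1), hri⟩).2 h1
  have h2 := map_rel3 f.symm (f ⟨y^i, hyi⟩).2 hα hβ hdec
  have h3 : (⟨((f ⟨y^i, hyi⟩ : ↥(XI (p := p) t j' i')) : A), (f ⟨y^i, hyi⟩).2⟩ :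
      ↥(XI (p := p) t j' i')) = f ⟨y^i, hyi⟩ := Subtype.ext rfl
  rw [h3, f.symm_apply_apply] at h2
  exact no_decomp t θ hp hj1 hjd (show i < p by omega) htu
    (f.symm ⟨α, hα⟩).2 (f.symm ⟨β, hβ⟩).2 h2

theorem main_general (t θ : R) (ht0 : t ≠ 0) (htu : ¬ IsUnit t) {d : ℕ}
    (hp : (p : R) = t^d * θ) {j i j' i' : ℕ}
    (hj1 : 1 ≤ j) (hjd : j + 1 ≤ d) (hj1' : 1 ≤ j') (hjd' : j' + 1 ≤ d)
    (hi1 : 1 ≤ i) (h2i : 2*i + 1 ≤ p) (hi1' : 1 ≤ i') (h2i' : 2*i' + 1 ≤ p)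
    (hne : (j, i) ≠ (j', i')) :
    IsEmpty (↥(XI (p := p) t j i) ≃ₗ[MonoidAlgebra R G] ↥(XI (p := p) t j' i')) := by
  constructor
  intro f
  have hii : i = i' := by
    rcases lt_trichotomy i i' with hlt | heq | hgt
    · exact (key_i t θ hp htu hj1' hjd' h2i' hlt f.symm).elim
    · exact heq
    · exact (key_i t θ hp htu hj1 hjd h2i hgt f).elim
  have hjj : j = j' := by
    rcases lt_trichotomy j j' with hlt | heq | hgt
    · exact (key_j t θ hp ht0 htu hj1 hjd h2i hi1 hjd' hi1' h2i' hlt f).elim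
    · exact heq
    · exact (key_j t θ hp ht0 htu hj1' hjd' h2i' hi1' hjd hi1 h2i hgt f.symm).elim
  exact hne (by rw [hii, hjj])
end Step
end Main



/-- Let `p` be an odd prime and `R` the ring of integers of a
finite ramified extension of `ℚ_p` with prime element `t` and ramification
index `d > 1`, `G = ⟨a | a^p = 1⟩`. The `RG`-modules
`X_{ji} = t^j·RG + (a-1)^i·RG`, `1 ≤ j ≤ d-1`, `1 ≤ i ≤ (p-1)/2`, are pairwise
non-isomorphic. -/
theorem stmt_10 (p : ℕ) [Fact p.Prime] (hodd : p ≠ 2)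
    (T : Type*) [Field T] [Algebra ℚ_[p] T] [FiniteDimensional ℚ_[p] T]
    [Algebra ℤ_[p] T] [IsScalarTower ℤ_[p] ℚ_[p] T]
    (t θ : ↥(integralClosure ℤ_[p] T)) (ht : Irreducible t) (hθ : IsUnit θ)
    (d : ℕ) (hd : 1 < d) (hp : (p : ↥(integralClosure ℤ_[p] T)) = t ^ d * θ)
    (j i j' i' : ℕ) (hj1 : 1 ≤ j) (hjd : j ≤ d - 1) (hj1' : 1 ≤ j') (hjd' : j' ≤ d - 1)
    (hi1 : 1 ≤ i) (hip : i ≤ (p - 1) / 2) (hi1' : 1 ≤ i') (hip' : i' ≤ (p - 1) / 2)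
    (hne : (j, i) ≠ (j', i')) :
    letI R := ↥(integralClosure ℤ_[p] T)
    letI G := Multiplicative (ZMod p)
    letI a : MonoidAlgebra R G := MonoidAlgebra.of R G (Multiplicative.ofAdd 1)
    letI X : Ideal (MonoidAlgebra R G) :=
      Ideal.span {algebraMap R (MonoidAlgebra R G) (t ^ j), (a - 1) ^ i}
    letI X' : Ideal (MonoidAlgebra R G) :=
      Ideal.span {algebraMap R (MonoidAlgebra R G) (t ^ j'), (a - 1) ^ i'}
    IsEmpty (↥X ≃ₗ[MonoidAlgebra R G] ↥X') := by
  have hpp : 2 ≤ p := (Fact.out : p.Prime).two_le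
  have h2i : 2*i + 1 ≤ p := by omega
  have h2i' : 2*i' + 1 ≤ p := by omega
  exact main_general (R := ↥(integralClosure ℤ_[p] T)) (p := p) t θ ht.ne_zero ht.not_isUnit hp
    hj1 (by omega) hj1' (by omega) hi1 h2i hi1' h2i' hne
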